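/- Let k be a field, n ≥ 1, and let D be an invertible n×n matrix over k that is diagonalizable with n distinct eigenvalues, none equal to 1. Suppose M is a unipotent matrix, l ⊆ k^n is a one-dimensional subspace, and N is a matrix with (N−1)(k^n) ⊆ l and (N−1)l = 0, such that N·M = D. Then l is spanned by a cyclic vector for D (i.e., some v ∈ l satisfies that v, Dv, …, D^{n−1}v span k^n). -/

import Mathlib

open Polynomial


/-- If `D = N * M` with `D` invertible, regular semisimple (diagonalizable with
`n` distinct eigenvalues, none equal to `1`), `M` unipotent and `N` in the unipotent radical of
the parabolic stabilizing the line `l`, then `l` is spanned by a cyclic vector for `D`. -/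
theorem stmt_0 {k : Type*} [Field k] {n : ℕ} (hn : 1 ≤ n)
    (D M N : Matrix (Fin n) (Fin n) k)
    (hD : IsUnit D)
    (b : Module.Basis (Fin n) k (Fin n → k)) (μ : Fin n → k)
    (hμinj : Function.Injective μ) (hμone : ∀ i, μ i ≠ 1)
    (heig : ∀ i, D.mulVec (b i) = μ i • b i)
    (hM : IsNilpotent (M - 1))
    (l : Submodule k (Fin n → k)) (hl : Module.finrank k l = 1)
    (hN1 : ∀ x : Fin n → k, (N - 1).mulVec x ∈ l)
    (hN2 : ∀ x ∈ l, (N - 1).mulVec x = 0)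
    (hNM : N * M = D) :
    ∃ v ∈ l, v ≠ 0 ∧
      Submodule.span k (Set.range fun j : Fin n => (D ^ (j : ℕ)).mulVec v) = ⊤ := by
  classical
  obtain ⟨v, hvne, hv⟩ := (finrank_eq_one_iff' (K := k) (V := l)).mp hl
  set v0 : Fin n → k := (v : Fin n → k) with hv0def
  have hv0l : v0 ∈ l := v.2
  have hv0ne : v0 ≠ 0 := fun h => hvne (Subtype.ext h)
  have hlspan : ∀ x ∈ l, ∃ c : k, c • v0 = x := by
    intro x hx
    obtain ⟨c, hc⟩ := hv ⟨x, hx⟩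
    exact ⟨c, congrArg Subtype.val hc⟩
  set Dl : (Fin n → k) →ₗ[k] (Fin n → k) := Matrix.toLinAlgEquiv' D with hDl
  set Ml : (Fin n → k) →ₗ[k] (Fin n → k) := Matrix.toLinAlgEquiv' M with hMl
  set p : k[X] := ∏ i : Fin n, (X - C (μ i)) with hpdef
  have hpmonic : p.Monic := monic_prod_of_monic _ _ fun i _ => monic_X_sub_C _
  have hpdeg : p.natDegree = n := by
    rw [hpdef, natDegree_prod _ _ fun i _ => X_sub_C_ne_zero (μ i)]
    simp
  have hp0 : Polynomial.aeval Dl p = 0 := by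
    apply b.ext
    intro i
    have hfac : p = (∏ j ∈ Finset.univ.erase i, (X - C (μ j))) * (X - C (μ i)) :=
      (Finset.prod_erase_mul _ _ (Finset.mem_univ i)).symm
    have hzero : (Polynomial.aeval Dl (X - C (μ i))) (b i) = 0 := by
      simp [hDl, Matrix.toLinAlgEquiv'_apply, Module.algebraMap_end_apply, heig i]
    rw [hfac, map_mul, Module.End.mul_apply, hzero, map_zero, LinearMap.zero_apply]
  -- the cyclic subspace W
  set W : Submodule k (Fin n → k) :=
    Submodule.span k (Set.range fun m : ℕ => (Dl ^ m) v0) with hWdef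
  have hWD : W ≤ W.comap Dl := by
    rw [hWdef, Submodule.span_le]
    rintro x ⟨m, rfl⟩
    refine Submodule.subset_span ⟨m + 1, ?_⟩
    show (Dl ^ (m + 1)) v0 = Dl ((Dl ^ m) v0)
    rw [pow_succ', Module.End.mul_apply]
  have hv0W : v0 ∈ W := Submodule.subset_span ⟨0, by simp⟩
  have hlW : l ≤ W := by
    intro x hx
    obtain ⟨c, hc⟩ := hlspan x hx
    exact hc ▸ W.smul_mem c hv0W
  have hDM : ∀ x, Dl x - Ml x ∈ W := by
    intro x
    have h1 : Dl - Ml = (Matrix.toLinAlgEquiv' (N - 1)).comp Ml := by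
      rw [hDl, hMl, ← map_sub, ← hNM]
      have h : N * M - M = (N - 1) * M := by rw [sub_mul, one_mul]
      rw [h, map_mul]
      rfl
    have h2 := congrArg (fun f => f x) h1
    simp only [LinearMap.sub_apply, LinearMap.comp_apply, Matrix.toLinAlgEquiv'_apply] at h2
    rw [h2]
    exact hlW (hN1 _)
  have hWM : W ≤ W.comap Ml := by
    intro x hx
    have : Ml x = Dl x - (Dl x - Ml x) := by ring_nf
    rw [Submodule.mem_comap, this]
    exact W.sub_mem (hWD hx) (hDM x)
  -- quotient endomorphisms
  set Db := W.mapQ W Dl hWD with hDbdef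
  set Mb := W.mapQ W Ml hWM with hMbdef
  have hDbMb : Db = Mb := by
    apply LinearMap.ext
    intro y
    obtain ⟨x, rfl⟩ := Submodule.Quotient.mk_surjective W y
    rw [hDbdef, hMbdef, Submodule.mapQ_apply, Submodule.mapQ_apply, Submodule.Quotient.eq]
    exact hDM x
  -- nilpotency of Mb - 1
  obtain ⟨r, hr⟩ := hM
  have hMlnil : (Ml - 1) ^ r = 0 := by
    rw [hMl, ← map_one (Matrix.toLinAlgEquiv' (R := k) (n := Fin n)), ← map_sub, ← map_pow, hr,
      map_zero]
  have keyM : ∀ (m : ℕ) (x : Fin n → k),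
      ((Mb - 1) ^ m) (Submodule.Quotient.mk x) = Submodule.Quotient.mk (((Ml - 1) ^ m) x) := by
    intro m
    induction m with
    | zero => intro x; simp
    | succ m ih =>
      intro x
      rw [pow_succ', Module.End.mul_apply, ih, pow_succ', Module.End.mul_apply,
        LinearMap.sub_apply, LinearMap.sub_apply, Module.End.one_apply, Module.End.one_apply,
        hMbdef, Submodule.mapQ_apply, ← Submodule.Quotient.mk_sub]
  have keyD : ∀ (m : ℕ) (x : Fin n → k),
      (Db ^ m) (Submodule.Quotient.mk x) = Submodule.Quotient.mk ((Dl ^ m) x) := by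
    intro m
    induction m with
    | zero => intro x; simp
    | succ m ih =>
      intro x
      rw [pow_succ', Module.End.mul_apply, ih, pow_succ', Module.End.mul_apply,
        hDbdef, Submodule.mapQ_apply]
  have keyP : ∀ (q : k[X]) (x : Fin n → k),
      (Polynomial.aeval Db q) (Submodule.Quotient.mk x)
        = Submodule.Quotient.mk ((Polynomial.aeval Dl q) x) := by
    intro q
    induction q using Polynomial.induction_on' with
    | add q1 q2 h1 h2 =>
      intro x
      rw [map_add, map_add, LinearMap.add_apply, LinearMap.add_apply, h1, h2,
        Submodule.Quotient.mk_add]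
    | monomial m a =>
      intro x
      rw [Polynomial.aeval_monomial, Polynomial.aeval_monomial, Module.End.mul_apply,
        Module.End.mul_apply, keyD, Module.algebraMap_end_apply, Module.algebraMap_end_apply,
        Submodule.Quotient.mk_smul]
  -- aeval p at Db vanishes, and (Db - 1)^r vanishes
  have hDb0 : Polynomial.aeval Db p = 0 := by
    apply LinearMap.ext
    intro y
    obtain ⟨x, rfl⟩ := Submodule.Quotient.mk_surjective W y
    rw [keyP, hp0]
    simp
  have hq0 : Polynomial.aeval Db ((X - 1 : k[X]) ^ r) = 0 := by
    have h1 : Polynomial.aeval Db ((X - 1 : k[X]) ^ r) = (Db - 1) ^ r := by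
      rw [map_pow, map_sub, Polynomial.aeval_X, map_one]
    rw [h1, hDbMb]
    apply LinearMap.ext
    intro y
    obtain ⟨x, rfl⟩ := Submodule.Quotient.mk_surjective W y
    rw [keyM, hMlnil]
    simp
  -- coprimality forces the quotient to vanish
  have hcop : IsCoprime p ((X - 1 : k[X]) ^ r) := by
    have : IsCoprime p (X - 1 : k[X]) := by
      rw [hpdef]
      apply IsCoprime.prod_left
      intro i _
      have : (X - 1 : k[X]) = X - C 1 := by rw [map_one]
      rw [this]
      exact isCoprime_X_sub_C_of_isUnit_sub (sub_ne_zero_of_ne (hμone i)).isUnit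
    exact this.pow_right
  obtain ⟨a, c, hac⟩ := hcop
  have hone : (1 : Module.End k ((Fin n → k) ⧸ W)) = 0 := by
    have := congrArg (Polynomial.aeval Db) hac
    rw [map_add, map_mul, map_mul, hDb0, hq0, mul_zero, mul_zero, add_zero, map_one] at this
    exact this.symm
  have hWtop : W = ⊤ := by
    rw [eq_top_iff]
    intro x _
    have h1 : (Submodule.Quotient.mk x : (Fin n → k) ⧸ W) = 0 := by
      have := congrArg (fun f : Module.End k ((Fin n → k) ⧸ W) =>
        f (Submodule.Quotient.mk x)) hone
      simpa using this
    exact (Submodule.Quotient.mk_eq_zero W).mp h1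
  -- reduce to the first n powers
  set S : Submodule k (Fin n → k) :=
    Submodule.span k (Set.range fun j : Fin n => (Dl ^ (j : ℕ)) v0) with hSdef
  have hlow : ∀ q : k[X], q.natDegree < n → (Polynomial.aeval Dl q) v0 ∈ S := by
    intro q hq
    rw [Polynomial.aeval_eq_sum_range' hq]
    rw [LinearMap.sum_apply]
    apply Submodule.sum_mem
    intro i hi
    rw [LinearMap.smul_apply]
    refine S.smul_mem _ (Submodule.subset_span ⟨⟨i, Finset.mem_range.mp hi⟩, rfl⟩)
  have hred : ∀ m : ℕ, (Dl ^ m) v0 ∈ S := by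
    intro m
    have hmod : ((X : k[X]) ^ m) %ₘ p + p * (((X : k[X]) ^ m) /ₘ p) = (X : k[X]) ^ m :=
      Polynomial.modByMonic_add_div _ p
    have heq : (Dl ^ m) v0 = (Polynomial.aeval Dl (((X : k[X]) ^ m) %ₘ p)) v0 := by
      have := congrArg (fun q => (Polynomial.aeval Dl q) v0) hmod
      simp only [map_add, map_mul, map_pow, Polynomial.aeval_X, LinearMap.add_apply,
        Module.End.mul_apply, hp0, LinearMap.zero_apply, map_zero, add_zero] at this
      exact this.symm
    rw [heq]
    by_cases hz : ((X : k[X]) ^ m) %ₘ p = 0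
    · rw [hz, map_zero]; exact S.zero_mem
    · apply hlow
      rw [← hpdeg]
      exact Polynomial.natDegree_lt_natDegree hz
        (Polynomial.degree_modByMonic_lt _ hpmonic)
  have hStop : S = ⊤ := by
    rw [eq_top_iff, ← hWtop, hWdef, Submodule.span_le]
    rintro x ⟨m, rfl⟩
    exact hred m
  refine ⟨v0, hv0l, hv0ne, ?_⟩
  have hfun : (fun j : Fin n => (D ^ (j : ℕ)).mulVec v0)
      = fun j : Fin n => (Dl ^ (j : ℕ)) v0 := by
    funext j
    rw [hDl, ← map_pow, Matrix.toLinAlgEquiv'_apply]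
  rw [hfun]
  exact hStop
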